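/- If G satisfies the property that any two vanishing elements lying in distinct conjugacy classes have orders with gcd at most 2, then for any normal subgroup N of G, the quotient G/N also satisfies this property. -/

import Mathlib

open CategoryTheory

/-- An element `g` of a group is a *vanishing element* if some irreducible complex
character vanishes at `g`. -/
def IsVanishing {G : Type} [Group G] (g : G) : Prop :=
  ∃ V : FDRep ℂ G, Simple V ∧ V.character g = 0

section aux

variable {G : Type} [Group G] (N : Subgroup G) [N.Normal]

/-- Pulling back a simple representation of `G ⧸ N` along the quotient map yields a simple
representation of `G`. -/
lemma simple_res (V : FDRep ℂ (G ⧸ N)) (hV : Simple V) :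
    Simple ((Action.res (FGModuleCat ℂ) (QuotientGroup.mk' N)).obj V) := by
  set φ : G →* G ⧸ N := QuotientGroup.mk' N with hφ
  set W := (Action.res (FGModuleCat ℂ) φ).obj V with hW
  constructor
  intro Y f hf
  constructor
  · -- iso → nonzero
    intro hiso h0
    have h1 : (𝟙 W : W ⟶ W) = 0 := by
      have ha : (𝟙 W : W ⟶ W) = inv f ≫ f := (IsIso.inv_hom_id f).symm
      have hb : inv f ≫ f = inv f ≫ (0 : Y ⟶ W) := congrArg (fun g => inv f ≫ g) h0
      rw [ha, hb, Limits.comp_zero]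
    have h2 : (𝟙 V : V ⟶ V) = 0 := by
      apply Action.Hom.ext
      have := congrArg Action.Hom.hom h1
      exact this
    exact CategoryTheory.id_nonzero V h2
  · -- nonzero mono → iso
    intro hne
    -- `f.hom` is injective
    have hmono2 : Mono ((Action.forget (FGModuleCat ℂ) G ⋙
        forget₂ (FGModuleCat ℂ) (ModuleCat ℂ)).map f) := by
      infer_instance
    have hinj : Function.Injective f.hom :=
      (ModuleCat.mono_iff_injective _).1 hmono2
    -- `N` acts trivially on `Y`
    have htriv : ∀ n ∈ N, Y.ρ n = 1 := by
      intro n hn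
      have hc : Y.ρ n ≫ f.hom = f.hom ≫ W.ρ n := f.comm n
      have hWn : W.ρ n = 𝟙 W.V := by
        show Action.ρ V ((QuotientGroup.mk' N) n) = 𝟙 W.V
        rw [show ((QuotientGroup.mk' N) n : G ⧸ N) = 1 from (QuotientGroup.eq_one_iff n).2 hn]
        exact Action.ρ_one V
      rw [hWn, Category.comp_id] at hc
      have hmf : Mono f.hom := by
        apply (forget₂ (FGModuleCat ℂ) (ModuleCat ℂ)).mono_of_mono_map
        exact (ModuleCat.mono_iff_injective _).2 hinj
      have : Y.ρ n ≫ f.hom = 𝟙 _ ≫ f.hom := by rw [hc, Category.id_comp]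
      exact (cancel_mono f.hom).1 this
    -- descend `Y` to a representation of `G ⧸ N`
    let Y' : FDRep ℂ (G ⧸ N) :=
      { V := Y.V
        ρ := QuotientGroup.lift N Y.ρ htriv }
    let f' : Y' ⟶ V :=
      { hom := f.hom
        comm := by
          intro g
          induction g using QuotientGroup.induction_on with
          | H g => exact f.comm g }
    have hmono' : Mono f' := by
      apply (Action.forget (FGModuleCat ℂ) (G ⧸ N)).mono_of_mono_map
      apply (forget₂ (FGModuleCat ℂ) (ModuleCat ℂ)).mono_of_mono_map
      exact (ModuleCat.mono_iff_injective _).2 hinj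
    have hne' : f' ≠ 0 := by
      intro h0
      apply hne
      apply Action.Hom.ext
      have := congrArg Action.Hom.hom h0
      exact this
    have hiso' : IsIso f' := (hV.mono_isIso_iff_nonzero f').2 hne'
    have hiso'hom : IsIso ((Action.forget (FGModuleCat ℂ) (G ⧸ N)).map f') :=
      inferInstance
    have : IsIso f.hom := hiso'hom
    exact Action.isIso_of_hom_isIso f

/-- A vanishing element of the quotient lifts to a vanishing element of the group. -/
lemma isVanishing_of_quotient (x : G) (h : IsVanishing (QuotientGroup.mk x : G ⧸ N)) :
    IsVanishing x := by
  obtain ⟨V, hV, hchar⟩ := h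
  refine ⟨(Action.res (FGModuleCat ℂ) (QuotientGroup.mk' N)).obj V,
    simple_res N V hV, ?_⟩
  exact hchar

end aux

set_option maxHeartbeats 1000000 in
/-- Property (⋆⋆) passes to quotients. -/
theorem stmt3 (G : Type) [Group G] [Fintype G] (N : Subgroup G) [N.Normal]
    (hG : ∀ x y : G, IsVanishing x → IsVanishing y → ¬ IsConj x y →
      Nat.gcd (orderOf x) (orderOf y) ≤ 2) :
    ∀ x y : G ⧸ N, IsVanishing x → IsVanishing y → ¬ IsConj x y →
      Nat.gcd (orderOf x) (orderOf y) ≤ 2 := by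
  intro xb yb hx hy hconj
  obtain ⟨x, rfl⟩ := QuotientGroup.mk_surjective xb
  obtain ⟨y, rfl⟩ := QuotientGroup.mk_surjective yb
  have hx' : IsVanishing x := isVanishing_of_quotient N x hx
  have hy' : IsVanishing y := isVanishing_of_quotient N y hy
  have hconj' : ¬ IsConj x y := fun h => hconj ((QuotientGroup.mk' N).map_isConj h)
  have hle : Nat.gcd (orderOf x) (orderOf y) ≤ 2 := hG x y hx' hy' hconj'
  have hdvd : Nat.gcd (orderOf (QuotientGroup.mk x : G ⧸ N))
      (orderOf (QuotientGroup.mk y : G ⧸ N)) ∣ Nat.gcd (orderOf x) (orderOf y) :=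
    Nat.dvd_gcd (dvd_trans (Nat.gcd_dvd_left _ _) (orderOf_map_dvd (QuotientGroup.mk' N) x))
      (dvd_trans (Nat.gcd_dvd_right _ _) (orderOf_map_dvd (QuotientGroup.mk' N) y))
  have hpos : 0 < Nat.gcd (orderOf x) (orderOf y) :=
    Nat.gcd_pos_of_pos_left _ (orderOf_pos x)
  exact le_trans (Nat.le_of_dvd hpos hdvd) hle
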